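/- Let E, F be locally convex real vector spaces, U ⊆ E open, k ≥ 2, and f : U × E^k → F a map such that f(x, ·) : E^k → F is symmetric k-linear for each x ∈ U. If the map h : U × E → F, h(x, y) = f(x, y, …, y), is continuous, then f is continuous. More generally, if h is C^r then f is C^r. -/

import Mathlib

open Filter Topology

section Polar
open Finset

lemma sum_powerset_neg_one_pow_card_real {α : Type*} [DecidableEq α] {x : Finset α} :
    (∑ m ∈ x.powerset, (-1 : ℝ) ^ #m) = if x = ∅ then 1 else 0 := by
  have h := Finset.sum_powerset_neg_one_pow_card (x := x)
  have h2 : ((∑ m ∈ x.powerset, (-1 : ℤ) ^ #m : ℤ) : ℝ) = ∑ m ∈ x.powerset, (-1 : ℝ) ^ #m := by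
    push_cast; rfl
  rw [← h2, h]
  split <;> norm_num

lemma polarization {E F : Type*} [AddCommGroup E] [Module ℝ E] [AddCommGroup F] [Module ℝ F]
    (k : ℕ) (B : MultilinearMap ℝ (fun _ : Fin k => E) F)
    (hsym : ∀ (σ : Equiv.Perm (Fin k)) (y : Fin k → E), B (y ∘ σ) = B y) (y : Fin k → E) :
    ∑ S : Finset (Fin k), (-1 : ℝ) ^ (k - S.card) • B (fun _ => ∑ i ∈ S, y i)
      = (k.factorial : ℝ) • B y := by
  classical
  have expand : ∀ S : Finset (Fin k),
      B (fun _ => ∑ i ∈ S, y i) = ∑ r ∈ Fintype.piFinset (fun _ : Fin k => S), B (y ∘ r) := by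
    intro S
    simpa [Function.comp_def] using
      B.map_sum_finset (A := fun _ : Fin k => S) (g := fun _ j => y j)
  have key : ∀ r : Fin k → Fin k,
      (∑ S : Finset (Fin k), if ∀ i, r i ∈ S then (-1 : ℝ) ^ (k - #S) else 0)
        = if Function.Surjective r then 1 else 0 := by
    intro r
    have h1 : ∀ S : Finset (Fin k), (∀ i, r i ∈ S) ↔ Finset.image r univ ⊆ S := by
      intro S; rw [Finset.image_subset_iff]; simp
    calc (∑ S : Finset (Fin k), if ∀ i, r i ∈ S then (-1 : ℝ) ^ (k - #S) else 0)
        = ∑ S ∈ univ.filter (fun S : Finset (Fin k) => Finset.image r univ ⊆ S),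
            (-1 : ℝ) ^ (k - #S) := by
          rw [Finset.sum_filter]
          exact Finset.sum_congr rfl fun S _ => by simp [h1 S]
      _ = ∑ W ∈ (Finset.image r univ)ᶜ.powerset, (-1 : ℝ) ^ (#W) := by
          refine Finset.sum_nbij' (i := fun S => Sᶜ) (j := fun W => Wᶜ) ?_ ?_ ?_ ?_ ?_
          · intro S hS
            simp only [mem_filter, mem_univ, true_and] at hS
            simpa [Finset.mem_powerset] using Finset.compl_subset_compl.2 hS
          · intro W hW
            simp only [Finset.mem_powerset] at hW
            simp only [mem_filter, mem_univ, true_and]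
            rw [← Finset.compl_subset_compl]
            simpa using hW
          · intro S _; simp
          · intro W _; simp
          · intro S _
            congr 1
            rw [Finset.card_compl]
            simp
      _ = if (Finset.image r univ)ᶜ = ∅ then 1 else 0 := sum_powerset_neg_one_pow_card_real
      _ = if Function.Surjective r then 1 else 0 := by
          congr 1
          simp only [eq_iff_iff]
          rw [Finset.compl_eq_empty_iff, Finset.eq_univ_iff_forall]
          constructor
          · intro hall b; rcases Finset.mem_image.1 (hall b) with ⟨a, _, ha⟩; exact ⟨a, ha⟩
          · intro hs b; rcases hs b with ⟨a, ha⟩; exact Finset.mem_image.2 ⟨a, mem_univ a, ha⟩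
  calc ∑ S : Finset (Fin k), (-1 : ℝ) ^ (k - S.card) • B (fun _ => ∑ i ∈ S, y i)
      = ∑ S : Finset (Fin k), ∑ r : Fin k → Fin k,
          (if ∀ i, r i ∈ S then (-1 : ℝ) ^ (k - #S) else 0) • B (y ∘ r) := by
        refine Finset.sum_congr rfl fun S _ => ?_
        rw [expand S, Finset.smul_sum]
        symm
        have heach : ∀ r : Fin k → Fin k,
            (if ∀ i, r i ∈ S then (-1 : ℝ) ^ (k - #S) else 0) • B (y ∘ r)
              = if r ∈ Fintype.piFinset (fun _ : Fin k => S)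
                  then (-1 : ℝ) ^ (k - #S) • B (y ∘ r) else 0 := by
          intro r; simp [ite_smul, Fintype.mem_piFinset]
        rw [Finset.sum_congr rfl fun r _ => heach r, Finset.sum_ite_mem, Finset.univ_inter]
    _ = ∑ r : Fin k → Fin k,
          (∑ S : Finset (Fin k), if ∀ i, r i ∈ S then (-1 : ℝ) ^ (k - #S) else 0) • B (y ∘ r) := by
        rw [Finset.sum_comm]
        exact Finset.sum_congr rfl fun r _ => (Finset.sum_smul).symm
    _ = ∑ r ∈ univ.filter (fun r : Fin k → Fin k => Function.Surjective r), B (y ∘ r) := by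
        rw [Finset.sum_filter]
        refine Finset.sum_congr rfl fun r _ => ?_
        rw [key r]
        split <;> simp
    _ = ∑ σ : Equiv.Perm (Fin k), B (y ∘ σ) := by
        symm
        refine Finset.sum_bij (i := fun (σ : Equiv.Perm (Fin k)) _ => (σ : Fin k → Fin k))
          ?_ ?_ ?_ ?_
        · intro σ _; simp [σ.surjective]
        · intro σ _ τ _ hst; exact Equiv.coe_fn_injective hst
        · intro r hr
          simp only [mem_filter, mem_univ, true_and] at hr
          exact ⟨Equiv.ofBijective r (Finite.surjective_iff_bijective.1 hr), mem_univ _, rfl⟩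
        · intro σ _; rfl
    _ = (k.factorial : ℝ) • B y := by
        rw [Finset.sum_congr rfl fun σ _ => hsym σ y, Finset.sum_const, Finset.card_univ,
          Fintype.card_perm, Nat.cast_smul_eq_nsmul, Fintype.card_fin]

lemma smul_sum_sub_combo {F : Type*} [AddCommGroup F] [Module ℝ F] {ι : Type*} (s : Finset ι)
    (a t : ℝ) (c : ι → ℝ) (A B : ι → F) :
    a • ∑ S ∈ s, c S • (t • (A S - B S))
      = t • ((a • ∑ S ∈ s, c S • A S) - (a • ∑ S ∈ s, c S • B S)) := by
  symm
  rw [← smul_sub, ← Finset.sum_sub_distrib, smul_comm t a, Finset.smul_sum]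
  exact congrArg (fun z => a • z)
    (Finset.sum_congr rfl fun S _ => by rw [← smul_sub, smul_comm t (c S)])

end Polar

/-- `HasMBDerivAt f x y v` : the directional (Gâteaux) derivative of `f` at `x` in the
direction `y` exists and equals `v`, in the Michal–Bastiani sense. -/
def HasMBDerivAt {G F : Type*} [AddCommGroup G] [Module ℝ G] [TopologicalSpace G]
    [AddCommGroup F] [Module ℝ F] [TopologicalSpace F]
    (f : G → F) (x y : G) (v : F) : Prop :=
  Tendsto (fun t : ℝ => t⁻¹ • (f (x + t • y) - f x)) (𝓝[≠] (0 : ℝ)) (𝓝 v)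

/-- `ContDiffMB n f U` : the map `f` is `C^n` on the open set `U` in the
Michal–Bastiani sense: there is a family `D k : U × G^k → F` of iterated directional
differentials of `f` (with `D 0 = f`), each of which is continuous on `U × G^k`. -/
def ContDiffMB {G F : Type*} [AddCommGroup G] [Module ℝ G] [TopologicalSpace G]
    [AddCommGroup F] [Module ℝ F] [TopologicalSpace F]
    (n : ℕ) (f : G → F) (U : Set G) : Prop :=
  ∃ D : ∀ k : ℕ, G × (Fin k → G) → F,
    (∀ x y, D 0 (x, y) = f x) ∧
    (∀ k, k < n → ∀ x ∈ U, ∀ y : Fin (k + 1) → G,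
      HasMBDerivAt (fun x' => D k (x', fun i : Fin k => y i.castSucc)) x (y (Fin.last k))
        (D (k + 1) (x, y))) ∧
    (∀ k, k ≤ n → ContinuousOn (D k) (U ×ˢ Set.univ))

/-- Let `E`, `F` be locally convex real spaces, `U ⊆ E` open, `k ≥ 2`, and
`f : U × E^k → F` such that `f(x,·)` is symmetric `k`-linear for each `x ∈ U`.
If `h(x,y) = f(x,y,…,y)` is continuous then `f` is continuous; more generally,
if `h` is `C^r` then `f` is `C^r`. -/
theorem continuous_and_contDiffMB_of_diagonal {E F : Type*}
    [AddCommGroup E] [Module ℝ E] [TopologicalSpace E] [IsTopologicalAddGroup E]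
    [ContinuousSMul ℝ E] [LocallyConvexSpace ℝ E]
    [AddCommGroup F] [Module ℝ F] [TopologicalSpace F] [IsTopologicalAddGroup F]
    [ContinuousSMul ℝ F] [LocallyConvexSpace ℝ F]
    (k : ℕ) (hk : 2 ≤ k) (U : Set E) (hU : IsOpen U)
    (f : E × (Fin k → E) → F)
    (hmulti : ∀ x ∈ U, ∃ B : MultilinearMap ℝ (fun _ : Fin k => E) F,
      (∀ (σ : Equiv.Perm (Fin k)) (y : Fin k → E), B (y ∘ σ) = B y) ∧
      ∀ y : Fin k → E, f (x, y) = B y)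
    (h : E × E → F) (hdef : ∀ p : E × E, h p = f (p.1, fun _ => p.2)) :
    (ContinuousOn h (U ×ˢ Set.univ) → ContinuousOn f (U ×ˢ Set.univ)) ∧
    (∀ r : ℕ, ContDiffMB r h (U ×ˢ Set.univ) → ContDiffMB r f (U ×ˢ Set.univ)) := by
  classical
  have hfac : (k.factorial : ℝ) ≠ 0 := by exact_mod_cast k.factorial_ne_zero
  -- the polarization expression
  set g : E × (Fin k → E) → F := fun p => (k.factorial : ℝ)⁻¹ •
      ∑ S : Finset (Fin k), (-1 : ℝ) ^ (k - S.card) • h (p.1, ∑ i ∈ S, p.2 i) with hg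
  have heq : ∀ p ∈ U ×ˢ (Set.univ : Set (Fin k → E)), f p = g p := by
    rintro ⟨x, y⟩ hp
    obtain ⟨B, hBsym, hBeq⟩ := hmulti x hp.1
    have hh : ∀ S : Finset (Fin k), h (x, ∑ i ∈ S, y i) = B (fun _ => ∑ i ∈ S, y i) := by
      intro S; rw [hdef]; exact hBeq _
    simp only [hg]
    simp only [hh]
    rw [polarization k B hBsym y, inv_smul_smul₀ hfac, hBeq]
  have hcont : ContinuousOn h (U ×ˢ Set.univ) → ContinuousOn f (U ×ˢ Set.univ) := by
    intro hc
    have hgc : ContinuousOn g (U ×ˢ Set.univ) := by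
      apply ContinuousOn.const_smul
      apply continuousOn_finset_sum
      intro S _
      apply ContinuousOn.const_smul
      have hφ : Continuous (fun p : E × (Fin k → E) => ((p.1, ∑ i ∈ S, p.2 i) : E × E)) :=
        continuous_fst.prodMk
          (continuous_finset_sum _ fun i _ => (continuous_apply i).comp continuous_snd)
      exact hc.comp hφ.continuousOn (by rintro ⟨x, y⟩ ⟨hx, -⟩; exact ⟨hx, trivial⟩)
    exact hgc.congr heq
  refine ⟨hcont, ?_⟩
  rintro r ⟨Dh, hD0, hDd, hDc⟩
  -- the candidate higher differentials of f
  set L : Finset (Fin k) → E × (Fin k → E) → E × E :=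
    fun S p => (p.1, ∑ i ∈ S, p.2 i) with hLdef
  have hL : ∀ (S : Finset (Fin k)) (p q : E × (Fin k → E)) (t : ℝ),
      L S (p + t • q) = L S p + t • L S q := by
    intro S p q t
    simp only [hLdef, Prod.mk_add_mk, Prod.smul_mk, Prod.fst_add, Prod.snd_add,
      Prod.smul_fst, Prod.smul_snd]
    refine Prod.ext rfl ?_
    simp [Finset.sum_add_distrib, Finset.smul_sum]
  have hLmem : ∀ (S : Finset (Fin k)) (p : E × (Fin k → E)),
      p ∈ U ×ˢ (Set.univ : Set (Fin k → E)) →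
      L S p ∈ U ×ˢ (Set.univ : Set E) := fun S p hp => ⟨hp.1, trivial⟩
  have hLcont : ∀ S : Finset (Fin k), Continuous (L S) := fun S =>
    continuous_fst.prodMk
      (continuous_finset_sum _ fun i _ => (continuous_apply i).comp continuous_snd)
  set Dg : ∀ j : ℕ, (E × (Fin k → E)) × (Fin j → E × (Fin k → E)) → F :=
    fun j pz => (k.factorial : ℝ)⁻¹ • ∑ S : Finset (Fin k), (-1 : ℝ) ^ (k - S.card) •
      Dh j (L S pz.1, fun i => L S (pz.2 i)) with hDgdef
  -- Dg 0 agrees with f on the set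
  have hDg0 : ∀ (p : E × (Fin k → E)) (z : Fin 0 → E × (Fin k → E)),
      p ∈ U ×ˢ (Set.univ : Set (Fin k → E)) → Dg 0 (p, z) = f p := by
    intro p z hp
    rw [heq p hp]
    simp only [hDgdef, hg]
    congr 1
    refine Finset.sum_congr rfl fun S _ => ?_
    rw [hD0 (L S p) (fun i => L S (z i))]
  -- the core derivative computation
  have core : ∀ j, j < r → ∀ p ∈ U ×ˢ (Set.univ : Set (Fin k → E)),
      ∀ y : Fin (j + 1) → E × (Fin k → E),
      HasMBDerivAt (fun p' => Dg j (p', fun i : Fin j => y i.castSucc)) p (y (Fin.last j))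
        (Dg (j + 1) (p, y)) := by
    intro j hj p hp y
    have hder : ∀ S : Finset (Fin k),
        Tendsto (fun t : ℝ => t⁻¹ •
            (Dh j (L S p + t • L S (y (Fin.last j)), fun i : Fin j => L S (y i.castSucc))
              - Dh j (L S p, fun i : Fin j => L S (y i.castSucc))))
          (𝓝[≠] (0 : ℝ)) (𝓝 (Dh (j + 1) (L S p, fun i => L S (y i)))) := by
      intro S
      exact hDd j hj (L S p) (hLmem S p hp) (fun i => L S (y i))
    have comb : Tendsto (fun t : ℝ => (k.factorial : ℝ)⁻¹ •
          ∑ S : Finset (Fin k), (-1 : ℝ) ^ (k - S.card) •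
            (t⁻¹ • (Dh j (L S p + t • L S (y (Fin.last j)),
                      fun i : Fin j => L S (y i.castSucc))
              - Dh j (L S p, fun i : Fin j => L S (y i.castSucc)))))
        (𝓝[≠] (0 : ℝ)) (𝓝 (Dg (j + 1) (p, y))) := by
      exact (tendsto_finset_sum _ fun S _ =>
        (hder S).const_smul ((-1 : ℝ) ^ (k - S.card))).const_smul (k.factorial : ℝ)⁻¹
    refine comb.congr fun t => ?_
    simp only [hDgdef, hL]
    exact smul_sum_sub_combo Finset.univ (k.factorial : ℝ)⁻¹ t⁻¹
      (fun S : Finset (Fin k) => (-1 : ℝ) ^ (k - S.card)) _ _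
  refine ⟨fun j => if j = 0 then (fun pz => f pz.1) else Dg j, by intro x y; simp, ?_, ?_⟩
  · -- derivative conditions
    intro j hj p hp y
    rcases Nat.eq_zero_or_pos j with hj0 | hj0
    · subst hj0
      simp only [if_pos rfl, if_neg (Nat.one_ne_zero)]
      have hcore := core 0 hj p hp y
      have hopen : IsOpen (U ×ˢ (Set.univ : Set (Fin k → E))) := hU.prod isOpen_univ
      have hev : ∀ᶠ t in 𝓝[≠] (0 : ℝ),
          p + t • y (Fin.last 0) ∈ U ×ˢ (Set.univ : Set (Fin k → E)) := by
        have hten : Tendsto (fun t : ℝ => p + t • y (Fin.last 0)) (𝓝 0) (𝓝 p) := by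
          have hc : Continuous (fun t : ℝ => p + t • y (Fin.last 0)) :=
            continuous_const.add (continuous_id.smul continuous_const)
          exact hc.tendsto' 0 p (by simp)
        exact Filter.Eventually.filter_mono nhdsWithin_le_nhds
          (hten.eventually (hopen.eventually_mem hp))
      refine hcore.congr' ?_
      filter_upwards [hev] with t ht
      simp only [if_true]
      rw [hDg0 _ _ ht, hDg0 _ _ hp]
    · have h1 : j ≠ 0 := Nat.pos_iff_ne_zero.mp hj0
      simp only [if_neg h1, if_neg (Nat.succ_ne_zero j)]
      exact core j hj p hp y
  · -- continuity conditions
    intro j hjr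
    rcases Nat.eq_zero_or_pos j with hj0 | hj0
    · subst hj0
      simp only [if_pos rfl]
      have hhc : ContinuousOn h (U ×ˢ (Set.univ : Set E)) := by
        have h0 := hDc 0 (Nat.zero_le r)
        have hφ : Continuous (fun x : E × E =>
            ((x, Fin.elim0) : (E × E) × (Fin 0 → E × E))) := by
          exact continuous_id.prodMk continuous_const
        have := h0.comp hφ.continuousOn
          (fun x hx => (by exact ⟨hx, trivial⟩ :
            ((x, Fin.elim0) : (E × E) × (Fin 0 → E × E)) ∈ (U ×ˢ Set.univ) ×ˢ Set.univ))
        refine this.congr fun x hx => ?_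
        simp only [Function.comp]
        rw [hD0]
      have hfc : ContinuousOn f (U ×ˢ (Set.univ : Set (Fin k → E))) := hcont hhc
      exact hfc.comp continuous_fst.continuousOn (fun pz hpz => hpz.1)
    · simp only [if_neg (Nat.pos_iff_ne_zero.mp hj0)]
      apply ContinuousOn.const_smul
      apply continuousOn_finset_sum
      intro S _
      apply ContinuousOn.const_smul
      have hΦ : Continuous (fun pz : (E × (Fin k → E)) × (Fin j → E × (Fin k → E)) =>
          ((L S pz.1, fun i => L S (pz.2 i)) : (E × E) × (Fin j → E × E))) := by
        refine ((hLcont S).comp continuous_fst).prodMk ?_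
        exact continuous_pi fun i => (hLcont S).comp ((continuous_apply i).comp continuous_snd)
      exact (hDc j hjr).comp hΦ.continuousOn
        (fun pz hpz => ⟨hLmem S pz.1 hpz.1, trivial⟩)
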